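/- Let s : (0,1] → ℝ≥0 be a step function with finitely many pieces. Then there exists a nondecreasing step function s̃ : (0,1] → ℝ≥0 with finitely many pieces such that: (i) ∫₀^m s̃(x)dx ≤ ∫₀^m s(x)dx for all m ∈ (0,1]; (ii) ∫₀^1 s̃(x)dx = ∫₀^1 s(x)dx; and (iii) at every point of discontinuity m₀ ∈ (0,1) of s̃, ∫₀^{m₀} s̃(x)dx = ∫₀^{m₀} s(x)dx. -/

import Mathlib

open MeasureTheory Finset

namespace PD

open Finset

lemma discrete : ∀ (k : ℕ), 0 < k → ∀ (l v : ℕ → ℝ), (∀ i < k, 0 < l i) → (∀ i < k, 0 ≤ v i) →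
    ∃ w : ℕ → ℝ,
      (∀ i j, i ≤ j → j < k → w i ≤ w j) ∧
      (∀ i < k, 0 ≤ w i) ∧
      (∀ n ≤ k, ∑ j ∈ range n, w j * l j ≤ ∑ j ∈ range n, v j * l j) ∧
      (∑ j ∈ range k, w j * l j = ∑ j ∈ range k, v j * l j) ∧
      (∀ n, 0 < n → n < k → w (n-1) < w n → ∑ j ∈ range n, w j * l j = ∑ j ∈ range n, v j * l j) ∧
      (∀ b : ℝ, (∀ n, 0 < n → n ≤ k → b * (∑ j ∈ range n, l j) ≤ ∑ j ∈ range n, v j * l j) →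
        ∀ i < k, b ≤ w i) := by
  intro k
  induction k using Nat.strong_induction_on with
  | _ k IH =>
    intro hk l v hl hv
    classical
    set T : ℕ → ℝ := fun n => ∑ j ∈ range n, l j with hT
    set V : ℕ → ℝ := fun n => ∑ j ∈ range n, v j * l j with hV
    have hTpos : ∀ n, 0 < n → n ≤ k → 0 < T n := by
      intro n hn hnk
      have : 0 < l 0 := hl 0 (by omega)
      calc (0:ℝ) < ∑ j ∈ range n, l j := by
            apply Finset.sum_pos
            · intro i hi; exact hl i (by simp at hi; omega)
            · exact ⟨0, by simp [hn]⟩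
        _ = T n := rfl
    -- choose m minimizing V i / T i over i in Icc 1 k
    obtain ⟨m, hmmem, hmmin⟩ := Finset.exists_min_image (Finset.Icc 1 k) (fun i => V i / T i)
      ⟨k, by simp [hk]; omega⟩
    simp only [Finset.mem_Icc] at hmmem
    obtain ⟨hm1, hmk⟩ := hmmem
    set c : ℝ := V m / T m with hc
    have hTm : 0 < T m := hTpos m hm1 hmk
    have hcTm : c * T m = V m := by rw [hc, div_mul_cancel₀ _ hTm.ne']
    have hVnn : ∀ n ≤ k, 0 ≤ V n := by
      intro n hn
      apply Finset.sum_nonneg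
      intro i hi; simp at hi
      exact mul_nonneg (hv i (by omega)) (hl i (by omega)).le
    have hcnn : 0 ≤ c := div_nonneg (hVnn m hmk) hTm.le
    have hclow : ∀ i, 0 < i → i ≤ k → c * T i ≤ V i := by
      intro i hi hik
      have := hmmin i (by simp [Finset.mem_Icc]; omega)
      have hTi := hTpos i hi hik
      calc c * T i ≤ (V i / T i) * T i := by
            apply mul_le_mul_of_nonneg_right _ hTi.le
            exact this
        _ = V i := by field_simp
    by_cases hmeq : m = k
    · -- constant solution
      refine ⟨fun _ => c, ?_, ?_, ?_, ?_, ?_, ?_⟩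
      · intros; exact le_refl c
      · intros; exact hcnn
      · intro n hn
        rcases Nat.eq_zero_or_pos n with h0 | h0
        · simp [h0]
        · have := hclow n h0 hn
          calc ∑ j ∈ range n, c * l j = c * T n := by rw [hT]; rw [Finset.mul_sum]
            _ ≤ V n := this
      · have : ∑ j ∈ range k, c * l j = c * T k := by rw [hT, Finset.mul_sum]
        rw [this, ← hmeq, hcTm, hmeq]
      · intro n _ _ habs; exact absurd habs (lt_irrefl c)
      · intro b hb i hi
        have h1 := hb m hm1 hmk
        have : b * T m ≤ c * T m := by rw [hcTm]; exact h1
        exact le_of_mul_le_mul_right (by linarith) hTm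
    · -- recurse on the tail
      have hmk' : m < k := lt_of_le_of_ne hmk hmeq
      set k' := k - m with hk'
      have hkk : k = m + k' := by omega
      have hk'pos : 0 < k' := by omega
      set l' : ℕ → ℝ := fun i => l (m + i) with hl'
      set v' : ℕ → ℝ := fun i => v (m + i) with hv'
      have hl'pos : ∀ i < k', 0 < l' i := fun i hi => hl (m+i) (by omega)
      have hv'nn : ∀ i < k', 0 ≤ v' i := fun i hi => hv (m+i) (by omega)
      obtain ⟨w', hw'mono, hw'nn, hw'le, hw'eq, hw'jump, hw'lb⟩ :=
        IH k' (by omega) hk'pos l' v' hl'pos hv'nn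
      -- shifted sums
      have hshiftT : ∀ n, T (m + n) = T m + ∑ j ∈ range n, l' j := by
        intro n; rw [hT]; simpa using Finset.sum_range_add l m n
      have hshiftV : ∀ n, V (m + n) = V m + ∑ j ∈ range n, v' j * l' j := by
        intro n; rw [hV]; simpa using Finset.sum_range_add (fun j => v j * l j) m n
      -- c is a valid lower bound for the tail problem
      have hcb : ∀ n, 0 < n → n ≤ k' → c * (∑ j ∈ range n, l' j) ≤ ∑ j ∈ range n, v' j * l' j := by
        intro n hn hnk
        have h1 := hclow (m + n) (by omega) (by omega)
        have h2 := hshiftT n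
        have h3 := hshiftV n
        nlinarith [hcTm]
      have hcw' : ∀ i < k', c ≤ w' i := hw'lb c hcb
      refine ⟨fun j => if j < m then c else w' (j - m), ?_, ?_, ?_, ?_, ?_, ?_⟩
      · intro i j hij hjk
        by_cases hi : i < m <;> by_cases hj : j < m <;> simp [hi, hj]
        · exact hcw' (j - m) (by omega)
        · omega
        · exact hw'mono (i-m) (j-m) (by omega) (by omega)
      · intro i hi
        by_cases h : i < m <;> simp [h]
        · exact hcnn
        · exact hw'nn (i - m) (by omega)
      · intro n hn
        by_cases h : n ≤ m
        · have : ∑ j ∈ range n, (if j < m then c else w' (j-m)) * l j = c * T n := by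
            rw [hT, Finset.mul_sum]
            apply Finset.sum_congr rfl
            intro j hj; simp at hj
            simp [show j < m by omega, mul_comm]
          rw [this]
          rcases Nat.eq_zero_or_pos n with h0 | h0
          · simp [h0, hT]
          · exact hclow n h0 hn
        · push_neg at h
          have hn' : n = m + (n - m) := by omega
          rw [hn', Finset.sum_range_add, Finset.sum_range_add]
          have e1 : ∑ j ∈ range m, (if j < m then c else w' (j-m)) * l j = c * T m := by
            rw [hT, Finset.mul_sum]
            apply Finset.sum_congr rfl
            intro j hj; simp at hj; simp [hj, mul_comm]
          have e2 : ∑ j ∈ range (n-m), (if (m+j) < m then c else w' (m+j-m)) * l (m+j)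
              = ∑ j ∈ range (n-m), w' j * l' j := by
            apply Finset.sum_congr rfl
            intro j hj; simp [hl']
          rw [e1, e2, hcTm]
          have := hw'le (n - m) (by omega)
          have h3 := hshiftV (n - m)
          rw [← hn'] at h3
          rw [hV] at h3
          linarith [h3]
      · -- total equality
        have e1 : ∑ j ∈ range m, (if j < m then c else w' (j-m)) * l j = c * T m := by
          rw [hT, Finset.mul_sum]
          apply Finset.sum_congr rfl
          intro j hj; simp at hj; simp [hj, mul_comm]
        rw [hkk, Finset.sum_range_add, Finset.sum_range_add]
        have e2 : ∑ j ∈ range k', (if (m+j) < m then c else w' (m+j-m)) * l (m+j)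
            = ∑ j ∈ range k', w' j * l' j := by
          apply Finset.sum_congr rfl
          intro j hj; simp [hl']
        rw [e1, e2, hcTm, hw'eq]
      · -- jump condition
        intro n hn hnk hjump
        by_cases h : n ≤ m
        · rcases eq_or_lt_of_le h with heq | hlt
          · -- n = m: equality holds automatically
            have : ∑ j ∈ range n, (if j < m then c else w' (j-m)) * l j = c * T n := by
              rw [hT, Finset.mul_sum]
              apply Finset.sum_congr rfl
              intro j hj; simp at hj
              simp [show j < m by omega, mul_comm]
            rw [this, heq, hcTm]
          · -- n < m : no jump possible
            exfalso
            simp [show n - 1 < m by omega, show n < m by omega] at hjump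
        · push_neg at h
          have hjump' : w' (n - m - 1) < w' (n - m) := by
            simpa [show ¬ (n - 1 < m) by omega, show ¬ (n < m) by omega,
              show n - 1 - m = n - m - 1 by omega] using hjump
          have := hw'jump (n - m) (by omega) (by omega) hjump'
          have hn' : n = m + (n - m) := by omega
          rw [hn', Finset.sum_range_add, Finset.sum_range_add]
          have e1 : ∑ j ∈ range m, (if j < m then c else w' (j-m)) * l j = c * T m := by
            rw [hT, Finset.mul_sum]
            apply Finset.sum_congr rfl
            intro j hj; simp at hj; simp [hj, mul_comm]
          have e2 : ∑ j ∈ range (n-m), (if (m+j) < m then c else w' (m+j-m)) * l (m+j)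
              = ∑ j ∈ range (n-m), w' j * l' j := by
            apply Finset.sum_congr rfl
            intro j hj; simp [hl']
          rw [e1, e2, hcTm, this]
      · -- lower bound clause
        intro b hb i hi
        have hbc : b ≤ c := by
          have h1 := hb m hm1 hmk
          have : b * T m ≤ c * T m := by rw [hcTm]; exact h1
          exact le_of_mul_le_mul_right (by linarith) hTm
        by_cases h : i < m <;> simp [h]
        · exact hbc
        · exact le_trans hbc (hcw' (i - m) (by omega))
open Finset MeasureTheory

lemma intg_const_Ioc (g : ℝ → ℝ) (a b : ℝ) (hab : a ≤ b) (u : ℝ)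
    (h : ∀ x ∈ Set.Ioc a b, g x = u) :
    IntegrableOn g (Set.Ioc a b) ∧ (∫ x in Set.Ioc a b, g x) = u * (b - a) := by
  have heq : Set.EqOn g (fun _ => u) (Set.Ioc a b) := fun x hx => h x hx
  constructor
  · exact (integrableOn_const (C := u) (by rw [Real.volume_Ioc]; exact ENNReal.ofReal_ne_top)).congr_fun
      heq.symm measurableSet_Ioc
  · rw [setIntegral_congr_fun measurableSet_Ioc heq, setIntegral_const, Real.volume_real_Ioc_of_le hab,
      smul_eq_mul, mul_comm]

lemma intg_chain (k : ℕ) (p : ℕ → ℝ) (hp : ∀ i < k, p i ≤ p (i+1)) (g : ℝ → ℝ) (u : ℕ → ℝ)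
    (hg : ∀ i < k, ∀ x ∈ Set.Ioc (p i) (p (i+1)), g x = u i) :
    ∀ n, n ≤ k → IntegrableOn g (Set.Ioc (p 0) (p n)) ∧
      (∫ x in Set.Ioc (p 0) (p n), g x) = ∑ j ∈ range n, u j * (p (j+1) - p j) := by
  intro n
  induction n with
  | zero => intro _; simp
  | succ n ih =>
    intro hnk
    obtain ⟨ihi, ihe⟩ := ih (by omega)
    have hmono : ∀ a b, a ≤ b → b ≤ k → p a ≤ p b := by
      intro a b hab hbk
      induction b with
      | zero => simp at hab; simp [hab]
      | succ b ihb =>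
        rcases Nat.lt_or_ge a (b+1) with h | h
        · exact le_trans (ihb (by omega) (by omega)) (hp b (by omega))
        · have : a = b + 1 := by omega
          simp [this]
    have h0n : p 0 ≤ p n := hmono 0 n (by omega) (by omega)
    have hnn : p n ≤ p (n+1) := hp n (by omega)
    obtain ⟨hi2, he2⟩ := intg_const_Ioc g (p n) (p (n+1)) hnn (u n) (hg n (by omega))
    have hunion : Set.Ioc (p 0) (p n) ∪ Set.Ioc (p n) (p (n+1)) = Set.Ioc (p 0) (p (n+1)) :=
      Set.Ioc_union_Ioc_eq_Ioc h0n hnn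
    constructor
    · rw [← hunion]; exact ihi.union hi2
    · rw [← hunion, setIntegral_union (Set.Ioc_disjoint_Ioc_of_le le_rfl) measurableSet_Ioc ihi hi2,
        ihe, he2, Finset.sum_range_succ]

lemma intg_part (k : ℕ) (p : ℕ → ℝ) (hp : ∀ i < k, p i ≤ p (i+1)) (g : ℝ → ℝ) (u : ℕ → ℝ)
    (hg : ∀ i < k, ∀ x ∈ Set.Ioc (p i) (p (i+1)), g x = u i)
    (n : ℕ) (hn : n < k) (m : ℝ) (hm : m ∈ Set.Ioc (p n) (p (n+1))) :
    (∫ x in Set.Ioc (p 0) m, g x) =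
      (∑ j ∈ range n, u j * (p (j+1) - p j)) + u n * (m - p n) := by
  obtain ⟨ihi, ihe⟩ := intg_chain k p hp g u hg n (by omega)
  have h0n : p 0 ≤ p n := by
    have h : ∀ b, b ≤ k → p 0 ≤ p b := by
      intro b hbk
      induction b with
      | zero => exact le_refl _
      | succ b ihb => exact le_trans (ihb (by omega)) (hp b (by omega))
    exact h n (by omega)
  obtain ⟨hm1, hm2⟩ := hm
  obtain ⟨hi2, he2⟩ := intg_const_Ioc g (p n) m hm1.le (u n)
    (fun x hx => hg n hn x ⟨hx.1, le_trans hx.2 hm2⟩)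
  have hunion : Set.Ioc (p 0) (p n) ∪ Set.Ioc (p n) m = Set.Ioc (p 0) m :=
    Set.Ioc_union_Ioc_eq_Ioc h0n hm1.le
  rw [← hunion, setIntegral_union (Set.Ioc_disjoint_Ioc_of_le le_rfl) measurableSet_Ioc ihi hi2, ihe, he2]


/-- A step function on `(0,1]` with finitely many pieces: constant on each
interval of some finite partition of `(0,1]` into half-open intervals. -/
def IsStepFun (g : ℝ → ℝ) : Prop :=
  ∃ (k : ℕ) (t : Fin (k + 1) → ℝ), StrictMono t ∧ t 0 = 0 ∧ t (Fin.last k) = 1 ∧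
    ∀ i : Fin k, ∀ x ∈ Set.Ioc (t i.castSucc) (t i.succ),
      ∀ y ∈ Set.Ioc (t i.castSucc) (t i.succ), g x = g y

theorem stmt13 (s : ℝ → ℝ) (hs : IsStepFun s)
    (hs0 : ∀ x ∈ Set.Ioc (0 : ℝ) 1, 0 ≤ s x) :
    ∃ t : ℝ → ℝ, IsStepFun t ∧ (∀ x ∈ Set.Ioc (0 : ℝ) 1, 0 ≤ t x) ∧
      MonotoneOn t (Set.Ioc (0 : ℝ) 1) ∧
      (∀ m ∈ Set.Ioc (0 : ℝ) 1,
        (∫ x in Set.Ioc (0 : ℝ) m, t x) ≤ ∫ x in Set.Ioc (0 : ℝ) m, s x) ∧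
      ((∫ x in Set.Ioc (0 : ℝ) 1, t x) = ∫ x in Set.Ioc (0 : ℝ) 1, s x) ∧
      (∀ m₀ ∈ Set.Ioo (0 : ℝ) 1, ¬ ContinuousAt t m₀ →
        (∫ x in Set.Ioc (0 : ℝ) m₀, t x) = ∫ x in Set.Ioc (0 : ℝ) m₀, s x) := by
  classical
  obtain ⟨k, τ, hτmono, hτ0, hτ1, hτconst⟩ := hs
  have hk : 0 < k := by
    rcases Nat.eq_zero_or_pos k with h | h
    · exfalso; subst h
      have : (Fin.last 0 : Fin 1) = 0 := rfl
      rw [this, hτ0] at hτ1; norm_num at hτ1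
    · exact h
  set p : ℕ → ℝ := fun n => τ ⟨min n k, by omega⟩ with hp
  have hp0 : p 0 = 0 := by rw [hp]; simpa using hτ0
  have hpk : p k = 1 := by
    have h : (⟨min k k, by omega⟩ : Fin (k+1)) = Fin.last k := by ext; simp [Fin.last]
    simp only [hp]
    rw [h]; exact hτ1
  have hplt : ∀ a b : ℕ, a < b → b ≤ k → p a < p b := by
    intro a b hab hbk
    exact hτmono (by simp [Fin.mk_lt_mk]; omega)
  have hpmono : Monotone p := by
    intro a b hab
    exact hτmono.monotone (by simp [Fin.mk_le_mk]; omega)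
  have hpi : ∀ i < k, 0 < p (i+1) - p i :=
    fun i hi => sub_pos.2 (hplt i (i+1) (by omega) (by omega))
  have hple : ∀ i < k, p i ≤ p (i+1) := fun i hi => by linarith [hpi i hi]
  have hsconst : ∀ i < k, ∀ x ∈ Set.Ioc (p i) (p (i+1)), s x = s (p (i+1)) := by
    intro i hi x hx
    have h1 : τ (Fin.castSucc ⟨i, hi⟩) = p i := by
      rw [hp]; congr 1; ext; simp <;> omega
    have h2 : τ (Fin.succ ⟨i, hi⟩) = p (i+1) := by
      rw [hp]; congr 1; ext; simp <;> omega
    have := hτconst ⟨i, hi⟩ x (by rw [h1, h2]; exact hx) (p (i+1))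
      (by rw [h1, h2]; exact ⟨hplt i (i+1) (by omega) (by omega), le_refl _⟩)
    exact this
  have hvnn : ∀ i < k, 0 ≤ s (p (i+1)) := by
    intro i hi
    apply hs0
    constructor
    · rw [← hp0]; exact hplt 0 (i+1) (by omega) (by omega)
    · rw [← hpk]; exact hpmono (by omega)
  have hIoc : ∀ x : ℝ, 0 < x → x ≤ 1 → ∃ n, n < k ∧ x ∈ Set.Ioc (p n) (p (n+1)) := by
    intro x hx0 hx1
    set n := Nat.findGreatest (fun i => p i < x) (k-1) with hn
    have hnle : n ≤ k - 1 := Nat.findGreatest_le _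
    have hpn : p n < x := by
      have h := Nat.findGreatest_spec (P := fun i => p i < x) (Nat.zero_le (k-1))
        (show p 0 < x by rw [hp0]; exact hx0)
      rw [hn]; exact h
    refine ⟨n, by omega, hpn, ?_⟩
    by_cases h : n + 1 ≤ k - 1
    · by_contra hc
      push_neg at hc
      have h2 := Nat.findGreatest_is_greatest (P := fun i => p i < x) (n := k-1) (k := n+1)
        (by omega) h
      exact h2 hc
    · have hnk : n + 1 = k := by omega
      rw [hnk, hpk]; exact hx1
  obtain ⟨w, hwmono, hwnn, hwle, hweq, hwjump, -⟩ :=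
    discrete k hk (fun i => p (i+1) - p i) (fun i => s (p (i+1))) hpi hvnn
  set t : ℝ → ℝ := fun x => ∑ i ∈ Finset.range k,
    if x ∈ Set.Ioc (p i) (p (i+1)) then w i else 0 with ht
  have htconst : ∀ i < k, ∀ x ∈ Set.Ioc (p i) (p (i+1)), t x = w i := by
    intro i hi x hx
    simp only [ht]
    rw [Finset.sum_eq_single_of_mem i (Finset.mem_range.2 hi)]
    · simp [hx]
    · intro j hj hji
      rw [if_neg]
      intro hxj
      obtain ⟨hx1, hx2⟩ := hx
      obtain ⟨hj1, hj2⟩ := hxj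
      rcases Nat.lt_or_ge j i with h | h
      · have h2 : p (j+1) ≤ p i := hpmono (by omega)
        linarith
      · have h2 : p (i+1) ≤ p j := hpmono (by omega)
        linarith
  refine ⟨t, ?_, ?_, ?_, ?_, ?_, ?_⟩
  · -- IsStepFun t
    refine ⟨k, τ, hτmono, hτ0, hτ1, ?_⟩
    intro i x hx y hy
    have hlt := i.isLt
    have h1 : τ (Fin.castSucc i) = p i.val := by
      rw [hp]; congr 1; ext; simp <;> omega
    have h2 : τ (Fin.succ i) = p (i.val+1) := by
      rw [hp]; congr 1; ext; simp <;> omega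
    rw [h1, h2] at hx hy
    rw [htconst i.val hlt x hx, htconst i.val hlt y hy]
  · -- nonneg
    intro x hx
    obtain ⟨n, hn, hxn⟩ := hIoc x hx.1 hx.2
    rw [htconst n hn x hxn]
    exact hwnn n hn
  · -- monotone
    intro x hx y hy hxy
    obtain ⟨nx, hnx, hxn⟩ := hIoc x hx.1 hx.2
    obtain ⟨ny, hny, hyn⟩ := hIoc y hy.1 hy.2
    rw [htconst nx hnx x hxn, htconst ny hny y hyn]
    apply hwmono nx ny ?_ hny
    by_contra h
    push_neg at h
    have : p (ny+1) ≤ p nx := hpmono (by omega)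
    have := hxn.1
    have := hyn.2
    linarith
  · -- partial integral inequality
    intro m hm
    obtain ⟨n, hn, hmn⟩ := hIoc m hm.1 hm.2
    have e : Set.Ioc (0:ℝ) m = Set.Ioc (p 0) m := by rw [hp0]
    rw [e, intg_part k p hple t w htconst n hn m hmn,
        intg_part k p hple s (fun i => s (p (i+1))) hsconst n hn m hmn]
    have h1 := hwle n (by omega)
    have h2 := hwle (n+1) (by omega)
    rw [Finset.sum_range_succ, Finset.sum_range_succ] at h2
    obtain ⟨hm1, hm2⟩ := hmn
    have hL := hpi n hn
    nlinarith [mul_nonneg (sub_nonneg.2 hm2) (sub_nonneg.2 h1),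
      mul_nonneg (sub_nonneg.2 hm1.le) (sub_nonneg.2 h2)]
  · -- total equality
    have e : Set.Ioc (0:ℝ) 1 = Set.Ioc (p 0) (p k) := by rw [hp0, hpk]
    rw [e, (intg_chain k p hple t w htconst k le_rfl).2,
        (intg_chain k p hple s (fun i => s (p (i+1))) hsconst k le_rfl).2]
    exact hweq
  · -- discontinuity
    intro m₀ hm₀ hdisc
    obtain ⟨n, hn, hmn⟩ := hIoc m₀ hm₀.1 hm₀.2.le
    rcases lt_or_eq_of_le hmn.2 with hlt | heq
    · exfalso
      apply hdisc
      apply ContinuousAt.congr continuousAt_const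
      exact (Filter.eventuallyEq_of_mem (isOpen_Ioo.mem_nhds ⟨hmn.1, hlt⟩)
        (fun x hx => htconst n hn x ⟨hx.1, hx.2.le⟩)).symm
    · have hn1 : n + 1 < k := by
        by_contra h
        have hnk : n + 1 = k := by omega
        have : m₀ = 1 := by rw [heq, hnk, hpk]
        linarith [hm₀.2]
      by_cases hww : w n = w (n+1)
      · exfalso
        apply hdisc
        have hEq : Set.EqOn t (fun _ => w n) (Set.Ioo (p n) (p (n+2))) := by
          intro x hx
          rcases le_or_gt x (p (n+1)) with h | h
          · exact htconst n hn x ⟨hx.1, h⟩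
          · exact (htconst (n+1) hn1 x ⟨h, hx.2.le⟩).trans hww.symm
        apply ContinuousAt.congr continuousAt_const
        refine (Filter.eventuallyEq_of_mem (isOpen_Ioo.mem_nhds ?_) hEq).symm
        rw [heq]
        exact ⟨hplt n (n+1) (by omega) (by omega), hplt (n+1) (n+2) (by omega) (by omega)⟩
      · have hjlt : w n < w (n+1) :=
          lt_of_le_of_ne (hwmono n (n+1) (by omega) hn1) hww
        have hje := hwjump (n+1) (by omega) hn1 (by simpa using hjlt)
        have e : Set.Ioc (0:ℝ) m₀ = Set.Ioc (p 0) (p (n+1)) := by rw [hp0, heq]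
        rw [e, (intg_chain k p hple t w htconst (n+1) (by omega)).2,
            (intg_chain k p hple s (fun i => s (p (i+1))) hsconst (n+1) (by omega)).2]
        exact hje

end PD
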